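/- Let (α,γ) be a measuring of an entwining structure (Ã,C̃)_ψ̃ to (A,C)_ψ. For every right A-module M, the space M ⊗ C̃ is a right (Ã,C̃)_ψ̃-module with coaction M⊗Δ̃ and action (m ⊗ c̃)·ã = m·α(c̃₍₁₎ ⊗ ã_β) ⊗ c̃₍₂₎^β, where ψ̃(c̃⊗ã) = ã_β⊗c̃^β. -/
import Mathlib


open TensorProduct LinearMap

/-- An entwining structure `(A, C)_ψ`. -/
structure Entwining (k A C : Type) [Field k] [Ring A] [Algebra k A]
    [AddCommGroup C] [Module k C] [Coalgebra k C] where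
  ψ : C ⊗[k] A →ₗ[k] A ⊗[k] C
  entw_mul : ψ ∘ₗ (mul' k A).lTensor C =
    (mul' k A).rTensor C ∘ₗ (TensorProduct.assoc k A A C).symm.toLinearMap ∘ₗ
      ψ.lTensor A ∘ₗ (TensorProduct.assoc k A C A).toLinearMap ∘ₗ
      ψ.rTensor A ∘ₗ (TensorProduct.assoc k C A A).symm.toLinearMap
  entw_unit : ∀ c : C, ψ (c ⊗ₜ[k] 1) = 1 ⊗ₜ[k] c
  entw_comul : (Coalgebra.comul (R := k) (A := C)).lTensor A ∘ₗ ψ =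
    (TensorProduct.assoc k A C C).toLinearMap ∘ₗ ψ.rTensor C ∘ₗ
      (TensorProduct.assoc k C A C).symm.toLinearMap ∘ₗ ψ.lTensor C ∘ₗ
      (TensorProduct.assoc k C C A).toLinearMap ∘ₗ
      (Coalgebra.comul (R := k) (A := C)).rTensor A
  entw_counit : (TensorProduct.rid k A).toLinearMap ∘ₗ
      (Coalgebra.counit (R := k) (A := C)).lTensor A ∘ₗ ψ =
    (TensorProduct.lid k A).toLinearMap ∘ₗ (Coalgebra.counit (R := k) (A := C)).rTensor A

/-- A right `C`-comodule structure on `V`. -/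
structure RComod (k C V : Type) [Field k] [AddCommGroup C] [Module k C] [Coalgebra k C]
    [AddCommGroup V] [Module k V] where
  ρ : V →ₗ[k] V ⊗[k] C
  coassoc : (Coalgebra.comul (R := k) (A := C)).lTensor V ∘ₗ ρ =
    (TensorProduct.assoc k V C C).toLinearMap ∘ₗ ρ.rTensor C ∘ₗ ρ
  counit_id : (TensorProduct.rid k V).toLinearMap ∘ₗ
      (Coalgebra.counit (R := k) (A := C)).lTensor V ∘ₗ ρ = LinearMap.id

/-- A left `C`-comodule structure on `V`. -/
structure LComod (k C V : Type) [Field k] [AddCommGroup C] [Module k C] [Coalgebra k C]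
    [AddCommGroup V] [Module k V] where
  ρ : V →ₗ[k] C ⊗[k] V
  coassoc : (Coalgebra.comul (R := k) (A := C)).rTensor V ∘ₗ ρ =
    (TensorProduct.assoc k C C V).symm.toLinearMap ∘ₗ ρ.lTensor C ∘ₗ ρ
  counit_id : (TensorProduct.lid k V).toLinearMap ∘ₗ
      (Coalgebra.counit (R := k) (A := C)).rTensor V ∘ₗ ρ = LinearMap.id

/-- A right `A`-module structure (`k`-linear) on `M`. -/
structure RAct (k A M : Type) [Field k] [Ring A] [Algebra k A]
    [AddCommGroup M] [Module k M] where
  act : M ⊗[k] A →ₗ[k] M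
  act_one : ∀ m : M, act (m ⊗ₜ[k] 1) = m
  act_mul : ∀ (m : M) (a b : A),
    act (act (m ⊗ₜ[k] a) ⊗ₜ[k] b) = act (m ⊗ₜ[k] (a * b))

variable {k A C M : Type} [Field k] [Ring A] [Algebra k A]
  [AddCommGroup C] [Module k C] [Coalgebra k C] [AddCommGroup M] [Module k M]

/-- The compatibility condition making `M` an entwined `(A,C)_ψ`-module. -/
def EntwCompat (E : Entwining k A C) (α : RAct k A M) (ρM : RComod k C M) : Prop :=
  ρM.ρ ∘ₗ α.act = α.act.rTensor C ∘ₗ (TensorProduct.assoc k M A C).symm.toLinearMap ∘ₗ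
    E.ψ.lTensor M ∘ₗ (TensorProduct.assoc k M C A).toLinearMap ∘ₗ ρM.ρ.rTensor A

/-- The `A`-action on `M ⊗ C` induced by an entwining: `(m⊗c)·a = m·a_α ⊗ c^α`. -/
noncomputable def entwAct (E : Entwining k A C) (ν : M ⊗[k] A →ₗ[k] M) :
    (M ⊗[k] C) ⊗[k] A →ₗ[k] M ⊗[k] C :=
  ν.rTensor C ∘ₗ (TensorProduct.assoc k M A C).symm.toLinearMap ∘ₗ
    E.ψ.lTensor M ∘ₗ (TensorProduct.assoc k M C A).toLinearMap

/-- The `C`-coaction `M ⊗ Δ` on `M ⊗ C`. -/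
noncomputable def coactMC (k C M : Type) [Field k] [AddCommGroup C] [Module k C]
    [Coalgebra k C] [AddCommGroup M] [Module k M] :
    M ⊗[k] C →ₗ[k] (M ⊗[k] C) ⊗[k] C :=
  (TensorProduct.assoc k M C C).symm.toLinearMap ∘ₗ
    (Coalgebra.comul (R := k) (A := C)).lTensor M

/-- The coaction on `V ⊗ A` induced by an entwining: `v⊗a ↦ v₍₀₎ ⊗ ψ(v₍₁₎⊗a)`. -/
noncomputable def entwCoact {V : Type} [AddCommGroup V] [Module k V]
    (E : Entwining k A C) (ρV : V →ₗ[k] V ⊗[k] C) :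
    V ⊗[k] A →ₗ[k] (V ⊗[k] A) ⊗[k] C :=
  (TensorProduct.assoc k V A C).symm.toLinearMap ∘ₗ E.ψ.lTensor V ∘ₗ
    (TensorProduct.assoc k V C A).toLinearMap ∘ₗ ρV.rTensor A

/-- The action `V ⊗ μ` on `V ⊗ A`. -/
noncomputable def actVA (k : Type) (A V : Type) [Field k] [Ring A] [Algebra k A]
    [AddCommGroup V] [Module k V] :
    (V ⊗[k] A) ⊗[k] A →ₗ[k] V ⊗[k] A :=
  (mul' k A).lTensor V ∘ₗ (TensorProduct.assoc k V A A).toLinearMap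

/-- The canonical map `A ⊗ₖ A → A ⊗ C`, `a ⊗ a' ↦ a a'₍₀₎ ⊗ a'₍₁₎`. -/
noncomputable def canHat (ΔA : A →ₗ[k] A ⊗[k] C) : A ⊗[k] A →ₗ[k] A ⊗[k] C :=
  (mul' k A).rTensor C ∘ₗ (TensorProduct.assoc k A A C).symm.toLinearMap ∘ₗ ΔA.lTensor A

/-- The subspace of relations defining `A ⊗_B A` inside `A ⊗ₖ A`. -/
noncomputable def relSub (k : Type) [Field k] {A : Type} [Ring A] [Algebra k A]
    (B : Set A) : Submodule k (A ⊗[k] A) :=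
  Submodule.span k {x | ∃ a a' b : A, b ∈ B ∧ x = (a * b) ⊗ₜ[k] a' - a ⊗ₜ[k] (b * a')}

/-- Convolution product of `f g : C → A`. -/
noncomputable def conv (f g : C →ₗ[k] A) : C →ₗ[k] A :=
  mul' k A ∘ₗ TensorProduct.map f g ∘ₗ Coalgebra.comul (R := k)

/-- The convolution unit `η ∘ ε`. -/
noncomputable def convUnit (k C A : Type) [Field k] [Ring A] [Algebra k A]
    [AddCommGroup C] [Module k C] [Coalgebra k C] : C →ₗ[k] A :=
  Algebra.linearMap k A ∘ₗ Coalgebra.counit (R := k)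

/-- A measuring of the entwining structure `(A',C')_ψ'` to `(A,C)_ψ`
(`A' = Ã`, `C' = C̃` in the paper's notation). -/
structure Measuring (k A C A' C' : Type) [Field k] [Ring A] [Algebra k A]
    [AddCommGroup C] [Module k C] [Coalgebra k C]
    [Ring A'] [Algebra k A'] [AddCommGroup C'] [Module k C'] [Coalgebra k C']
    (E : Entwining k A C) (E' : Entwining k A' C') where
  α : C' ⊗[k] A' →ₗ[k] A
  γ : C' →ₗ[k] A ⊗[k] C
  meas_mul : α ∘ₗ (mul' k A').lTensor C' =
    mul' k A ∘ₗ TensorProduct.map α α ∘ₗ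
      (TensorProduct.assoc k C' A' (C' ⊗[k] A')).symm.toLinearMap ∘ₗ
      ((TensorProduct.assoc k A' C' A').toLinearMap ∘ₗ E'.ψ.rTensor A' ∘ₗ
        (TensorProduct.assoc k C' A' A').symm.toLinearMap).lTensor C' ∘ₗ
      (TensorProduct.assoc k C' C' (A' ⊗[k] A')).toLinearMap ∘ₗ
      (Coalgebra.comul (R := k) (A := C')).rTensor (A' ⊗[k] A')
  meas_unit : ∀ c : C', α (c ⊗ₜ[k] 1) = Coalgebra.counit (R := k) c • (1 : A)
  meas_comul : (mul' k A).rTensor (C ⊗[k] C) ∘ₗ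
      (TensorProduct.assoc k A A (C ⊗[k] C)).symm.toLinearMap ∘ₗ
      ((TensorProduct.assoc k A C C).toLinearMap ∘ₗ E.ψ.rTensor C ∘ₗ
        (TensorProduct.assoc k C A C).symm.toLinearMap).lTensor A ∘ₗ
      (TensorProduct.assoc k A C (A ⊗[k] C)).toLinearMap ∘ₗ
      TensorProduct.map γ γ ∘ₗ Coalgebra.comul (R := k) =
    (Coalgebra.comul (R := k) (A := C)).lTensor A ∘ₗ γ
  meas_counit : (TensorProduct.rid k A).toLinearMap ∘ₗ
      (Coalgebra.counit (R := k) (A := C)).lTensor A ∘ₗ γ =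
    Algebra.linearMap k A ∘ₗ Coalgebra.counit (R := k) (A := C')
  meas_compat : (mul' k A).rTensor C ∘ₗ
      (TensorProduct.assoc k A A C).symm.toLinearMap ∘ₗ
      TensorProduct.map α γ ∘ₗ
      (TensorProduct.assoc k C' A' C').symm.toLinearMap ∘ₗ E'.ψ.lTensor C' ∘ₗ
      (TensorProduct.assoc k C' C' A').toLinearMap ∘ₗ
      (Coalgebra.comul (R := k) (A := C')).rTensor A' =
    (mul' k A).rTensor C ∘ₗ
      (TensorProduct.assoc k A A C).symm.toLinearMap ∘ₗ E.ψ.lTensor A ∘ₗ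
      (TensorProduct.assoc k A C A).toLinearMap ∘ₗ
      TensorProduct.map γ α ∘ₗ
      (TensorProduct.assoc k C' C' A').toLinearMap ∘ₗ
      (Coalgebra.comul (R := k) (A := C')).rTensor A'

variable {A' C' : Type} [Ring A'] [Algebra k A'] [AddCommGroup C'] [Module k C']
  [Coalgebra k C']

/-- The `A'`-action on `M ⊗ C'` induced by a measuring:
`(m ⊗ c̃)·ã = m·α(c̃₍₁₎ ⊗ ã_β) ⊗ c̃₍₂₎^β`. -/
noncomputable def measAct {E : Entwining k A C} {E' : Entwining k A' C'}
    (m : Measuring k A C A' C' E E') (ν : M ⊗[k] A →ₗ[k] M) :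
    (M ⊗[k] C') ⊗[k] A' →ₗ[k] M ⊗[k] C' :=
  ν.rTensor C' ∘ₗ (TensorProduct.assoc k M A C').symm.toLinearMap ∘ₗ
    (m.α.rTensor C' ∘ₗ (TensorProduct.assoc k C' A' C').symm.toLinearMap ∘ₗ
      E'.ψ.lTensor C' ∘ₗ (TensorProduct.assoc k C' C' A').toLinearMap ∘ₗ
      (Coalgebra.comul (R := k) (A := C')).rTensor A').lTensor M ∘ₗ
    (TensorProduct.assoc k M C' A').toLinearMap

section Aux

variable {k A C A' C' M : Type} [Field k] [Ring A] [Algebra k A]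
    [AddCommGroup C] [Module k C] [Coalgebra k C]
    [Ring A'] [Algebra k A'] [AddCommGroup C'] [Module k C'] [Coalgebra k C']
    [AddCommGroup M] [Module k M]
    {E : Entwining k A C} {E' : Entwining k A' C'}


/-- `G(c ⊗ a) = α(c₁ ⊗ a_β) ⊗ c₂^β`. -/
noncomputable def Gm (m : Measuring k A C A' C' E E') : C' ⊗[k] A' →ₗ[k] A ⊗[k] C' :=
  m.α.rTensor C' ∘ₗ (TensorProduct.assoc k C' A' C').symm.toLinearMap ∘ₗ
    E'.ψ.lTensor C' ∘ₗ (TensorProduct.assoc k C' C' A').toLinearMap ∘ₗ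
    (Coalgebra.comul (R := k) (A := C')).rTensor A'

/-- `Φ a (u ⊗ v) = α(u ⊗ a_β) ⊗ v^β`. -/
noncomputable def Phi (m : Measuring k A C A' C' E E') (a : A') :
    C' ⊗[k] C' →ₗ[k] A ⊗[k] C' :=
  m.α.rTensor C' ∘ₗ (TensorProduct.assoc k C' A' C').symm.toLinearMap ∘ₗ
    E'.ψ.lTensor C' ∘ₗ (TensorProduct.assoc k C' C' A').toLinearMap ∘ₗ
    (TensorProduct.mk k (C' ⊗[k] C') A').flip a

lemma Gm_apply (m : Measuring k A C A' C' E E') (c : C') (a : A') :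
    Gm m (c ⊗ₜ[k] a) = Phi m a (Coalgebra.comul (R := k) c) := by
  simp [Gm, Phi]

lemma key_unit (m : Measuring k A C A' C' E E') (c : C') :
    Gm m (c ⊗ₜ[k] (1 : A')) = (1 : A) ⊗ₜ[k] c := by
  rw [Gm_apply]
  have h : ∀ y : C' ⊗[k] C', Phi m (1 : A') y =
      ((Algebra.linearMap k A).rTensor C') (((Coalgebra.counit (R := k) (A := C')).rTensor C') y) := by
    intro y
    induction y using TensorProduct.induction_on with
    | zero => simp
    | tmul u v =>
        simp [Phi, E'.entw_unit, m.meas_unit, Algebra.algebraMap_eq_smul_one,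
          TensorProduct.smul_tmul']
    | add x y hx hy => simp [map_add, hx, hy]
  rw [h, Coalgebra.rTensor_counit_comul]
  simp


/-- `Y ((u₁ ⊗ u₂) ⊗ (x ⊗ y)) = α(u₁ ⊗ x_δ) ⊗ (u₂^δ ⊗ y)`. -/
noncomputable def Ym (m : Measuring k A C A' C' E E') :
    (C' ⊗[k] C') ⊗[k] (A' ⊗[k] C') →ₗ[k] A ⊗[k] (C' ⊗[k] C') :=
  m.α.rTensor (C' ⊗[k] C') ∘ₗ (TensorProduct.assoc k C' A' (C' ⊗[k] C')).symm.toLinearMap ∘ₗ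
    ((TensorProduct.assoc k A' C' C').toLinearMap ∘ₗ E'.ψ.rTensor C' ∘ₗ
      (TensorProduct.assoc k C' A' C').symm.toLinearMap).lTensor C' ∘ₗ
    (TensorProduct.assoc k C' C' (A' ⊗[k] C')).toLinearMap

/-- `Va a ((u₁ ⊗ u₂) ⊗ v) = α(u₁ ⊗ a_{βδ}) ⊗ (u₂^δ ⊗ v^β)`. -/
noncomputable def Va (m : Measuring k A C A' C' E E') (a : A') :
    (C' ⊗[k] C') ⊗[k] C' →ₗ[k] A ⊗[k] (C' ⊗[k] C') :=
  Ym m ∘ₗ E'.ψ.lTensor (C' ⊗[k] C') ∘ₗ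
    (TensorProduct.assoc k (C' ⊗[k] C') C' A').toLinearMap ∘ₗ
    (TensorProduct.mk k ((C' ⊗[k] C') ⊗[k] C') A').flip a

lemma Va_apply (m : Measuring k A C A' C' E E') (a : A') (s : C' ⊗[k] C') (v : C') :
    Va m a (s ⊗ₜ[k] v) = Ym m (s ⊗ₜ[k] E'.ψ (v ⊗ₜ[k] a)) := by
  simp [Va]

/-- `Wb b (z ⊗ (f ⊗ y)) = (z * α(f ⊗ b_γ)) ⊗ y^γ`. -/
noncomputable def Wbm (m : Measuring k A C A' C' E E') (b : A') :
    A ⊗[k] (C' ⊗[k] C') →ₗ[k] A ⊗[k] C' :=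
  (mul' k A).rTensor C' ∘ₗ (TensorProduct.assoc k A A C').symm.toLinearMap ∘ₗ
    (m.α.rTensor C' ∘ₗ (TensorProduct.assoc k C' A' C').symm.toLinearMap ∘ₗ
      E'.ψ.lTensor C' ∘ₗ ((TensorProduct.mk k C' A').flip b).lTensor C').lTensor A

/-- `Q (u ⊗ (x ⊗ s)) = α(u ⊗ x) ⊗ s`. -/
noncomputable def Qm (m : Measuring k A C A' C' E E') :
    C' ⊗[k] (A' ⊗[k] (C' ⊗[k] C')) →ₗ[k] A ⊗[k] (C' ⊗[k] C') :=
  m.α.rTensor (C' ⊗[k] C') ∘ₗ (TensorProduct.assoc k C' A' (C' ⊗[k] C')).symm.toLinearMap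

/-- `Θ a (u ⊗ v) = (assoc) (G(u ⊗ a_β) ⊗ v^β)`. -/
noncomputable def Theta (m : Measuring k A C A' C' E E') (a : A') :
    C' ⊗[k] C' →ₗ[k] A ⊗[k] (C' ⊗[k] C') :=
  (TensorProduct.assoc k A C' C').toLinearMap ∘ₗ (Gm m).rTensor C' ∘ₗ
    (TensorProduct.assoc k C' A' C').symm.toLinearMap ∘ₗ E'.ψ.lTensor C' ∘ₗ
    (TensorProduct.assoc k C' C' A').toLinearMap ∘ₗ
    (TensorProduct.mk k (C' ⊗[k] C') A').flip a

/-- `W b (z ⊗ c) = μ(z ⊗ —)(G(c ⊗ b))`. -/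
noncomputable def Wm (m : Measuring k A C A' C' E E') (b : A') :
    A ⊗[k] C' →ₗ[k] A ⊗[k] C' :=
  (mul' k A).rTensor C' ∘ₗ (TensorProduct.assoc k A A C').symm.toLinearMap ∘ₗ
    (Gm m ∘ₗ (TensorProduct.mk k C' A').flip b).lTensor A

lemma micro1 (m : Measuring k A C A' C' E E') (u : C') (t : A' ⊗[k] C') :
    (Coalgebra.comul (R := k) (A := C')).lTensor A
      (m.α.rTensor C' ((TensorProduct.assoc k C' A' C').symm (u ⊗ₜ[k] t))) =
    Qm m (u ⊗ₜ[k] ((Coalgebra.comul (R := k) (A := C')).lTensor A' t)) := by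
  induction t using TensorProduct.induction_on with
  | zero => simp
  | tmul x y => simp [Qm]
  | add x y hx hy => simp only [tmul_add, map_add, hx, hy]

lemma em2 (v : C') (a : A') :
    (Coalgebra.comul (R := k) (A := C')).lTensor A' (E'.ψ (v ⊗ₜ[k] a)) =
    (TensorProduct.assoc k A' C' C') (E'.ψ.rTensor C'
      ((TensorProduct.assoc k C' A' C').symm (E'.ψ.lTensor C'
        ((TensorProduct.assoc k C' C' A')
          ((Coalgebra.comul (R := k) (A := C')) v ⊗ₜ[k] a))))) := by
  have := LinearMap.congr_fun E'.entw_comul (v ⊗ₜ[k] a)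
  simpa using this

lemma micro2 (m : Measuring k A C A' C' E E') (a : A') (u : C') (s : C' ⊗[k] C') :
    Qm m (u ⊗ₜ[k] ((TensorProduct.assoc k A' C' C') (E'.ψ.rTensor C'
      ((TensorProduct.assoc k C' A' C').symm (E'.ψ.lTensor C'
        ((TensorProduct.assoc k C' C' A') (s ⊗ₜ[k] a))))))) =
    Va m a ((TensorProduct.assoc k C' C' C').symm (u ⊗ₜ[k] s)) := by
  induction s using TensorProduct.induction_on with
  | zero => simp
  | tmul v₁ v₂ =>
      simp only [assoc_tmul, lTensor_tmul, assoc_symm_tmul, Va_apply]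
      generalize E'.ψ (v₂ ⊗ₜ[k] a) = t₁
      induction t₁ using TensorProduct.induction_on with
      | zero => simp [Ym]
      | tmul x y =>
          simp only [assoc_symm_tmul, rTensor_tmul, tmul_add, Ym, coe_comp,
            Function.comp_apply, LinearEquiv.coe_coe, assoc_tmul, lTensor_tmul]
          generalize E'.ψ (v₁ ⊗ₜ[k] x) = t₂
          induction t₂ using TensorProduct.induction_on with
          | zero => simp
          | tmul e f => simp [Qm]
          | add p q hp hq =>
              simp only [add_tmul, tmul_add, map_add, hp, hq]
      | add p q hp hq => simp only [add_tmul, tmul_add, map_add, hp, hq]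
  | add p q hp hq => simp only [add_tmul, tmul_add, map_add, hp, hq]


/-- (Ib): `(1 ⊗ Δ) ∘ Φ_a = Va ∘ (1 ⊗ Δ)` reassociated. -/
lemma identIb (m : Measuring k A C A' C' E E') (a : A') :
    (Coalgebra.comul (R := k) (A := C')).lTensor A ∘ₗ Phi m a =
    Va m a ∘ₗ (TensorProduct.assoc k C' C' C').symm.toLinearMap ∘ₗ
      (Coalgebra.comul (R := k) (A := C')).lTensor C' := by
  apply TensorProduct.ext'
  intro u v
  simp only [coe_comp, Function.comp_apply, LinearEquiv.coe_coe, lTensor_tmul, Phi,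
    mk_apply, flip_apply, assoc_tmul]
  rw [micro1, em2, micro2]

/-- (Ia): `Θ_a = Va ∘ (Δ ⊗ 1)`. -/
lemma identIa (m : Measuring k A C A' C' E E') (a : A') :
    Theta m a = Va m a ∘ₗ (Coalgebra.comul (R := k) (A := C')).rTensor C' := by
  apply TensorProduct.ext'
  intro u v
  simp only [Theta, coe_comp, Function.comp_apply, LinearEquiv.coe_coe, mk_apply,
    flip_apply, assoc_tmul, lTensor_tmul, rTensor_tmul, Va_apply]
  generalize E'.ψ (v ⊗ₜ[k] a) = t
  induction t using TensorProduct.induction_on with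
  | zero => simp [Ym]
  | tmul x y =>
      simp only [assoc_symm_tmul, rTensor_tmul, Gm_apply]
      generalize (Coalgebra.comul (R := k) (A := C')) u = s
      induction s using TensorProduct.induction_on with
      | zero => simp [Phi, Ym]
      | tmul u₁ u₂ =>
          simp only [Phi, coe_comp, Function.comp_apply, LinearEquiv.coe_coe, mk_apply,
            flip_apply, assoc_tmul, lTensor_tmul, assoc_symm_tmul, rTensor_tmul, Ym]
          generalize E'.ψ (u₂ ⊗ₜ[k] x) = t₂
          induction t₂ using TensorProduct.induction_on with
          | zero => simp
          | tmul e f => simp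
          | add p q hp hq => simp only [add_tmul, tmul_add, map_add, hp, hq]
      | add p q hp hq => simp only [add_tmul, tmul_add, map_add, hp, hq]
  | add p q hp hq => simp only [add_tmul, tmul_add, map_add, hp, hq]

lemma micro12 (m : Measuring k A C A' C' E E') (b : A') (z : A ⊗[k] C') :
    Wm m b z = Wbm m b ((Coalgebra.comul (R := k) (A := C')).lTensor A z) := by
  induction z using TensorProduct.induction_on with
  | zero => simp
  | tmul z c =>
      simp only [Wm, coe_comp, Function.comp_apply, LinearEquiv.coe_coe, lTensor_tmul,
        mk_apply, flip_apply, Gm_apply]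
      generalize (Coalgebra.comul (R := k) (A := C')) c = s
      induction s using TensorProduct.induction_on with
      | zero => simp [Phi, Wbm]
      | tmul d₁ d₂ => simp [Phi, Wbm]
      | add p q hp hq => simp only [add_tmul, tmul_add, map_add, hp, hq]
  | add p q hp hq => simp only [map_add, hp, hq]

/-- (Ic): `W_b ∘ Φ_a = Wb ∘ Va ∘ (1 ⊗ Δ)` reassociated. -/
lemma identIc (m : Measuring k A C A' C' E E') (a b : A') :
    Wm m b ∘ₗ Phi m a =
    Wbm m b ∘ₗ Va m a ∘ₗ (TensorProduct.assoc k C' C' C').symm.toLinearMap ∘ₗ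
      (Coalgebra.comul (R := k) (A := C')).lTensor C' := by
  apply LinearMap.ext
  intro x
  simp only [coe_comp, Function.comp_apply]
  rw [micro12]
  have := LinearMap.congr_fun (identIb m a) x
  simp only [coe_comp, Function.comp_apply, LinearEquiv.coe_coe] at this
  rw [this]
  rfl


lemma emul (v : C') (a b : A') :
    E'.ψ (v ⊗ₜ[k] (a * b)) =
    (mul' k A').rTensor C' ((TensorProduct.assoc k A' A' C').symm
      (E'.ψ.lTensor A' ((TensorProduct.assoc k A' C' A')
        (E'.ψ (v ⊗ₜ[k] a) ⊗ₜ[k] b)))) := by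
  have := LinearMap.congr_fun E'.entw_mul (v ⊗ₜ[k] (a ⊗ₜ[k] b))
  simpa using this

noncomputable def I1m (E' : Entwining k A' C') :
    C' ⊗[k] (A' ⊗[k] (A' ⊗[k] C')) →ₗ[k] A' ⊗[k] (C' ⊗[k] (A' ⊗[k] C')) :=
  (TensorProduct.assoc k A' C' (A' ⊗[k] C')).toLinearMap ∘ₗ
    E'.ψ.rTensor (A' ⊗[k] C') ∘ₗ (TensorProduct.assoc k C' A' (A' ⊗[k] C')).symm.toLinearMap

noncomputable def Midm (m : Measuring k A C A' C' E E') :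
    (C' ⊗[k] C') ⊗[k] (A' ⊗[k] (A' ⊗[k] C')) →ₗ[k] A ⊗[k] C' :=
  (mul' k A).rTensor C' ∘ₗ (TensorProduct.assoc k A A C').symm.toLinearMap ∘ₗ
    (m.α.rTensor C' ∘ₗ (TensorProduct.assoc k C' A' C').symm.toLinearMap).lTensor A ∘ₗ
    m.α.rTensor (C' ⊗[k] (A' ⊗[k] C')) ∘ₗ
    (TensorProduct.assoc k C' A' (C' ⊗[k] (A' ⊗[k] C'))).symm.toLinearMap ∘ₗ
    (I1m E').lTensor C' ∘ₗ
    (TensorProduct.assoc k C' C' (A' ⊗[k] (A' ⊗[k] C'))).toLinearMap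

noncomputable def lhsMapm (m : Measuring k A C A' C' E E') :
    C' ⊗[k] (A' ⊗[k] (A' ⊗[k] C')) →ₗ[k] A ⊗[k] C' :=
  (m.α ∘ₗ (mul' k A').lTensor C').rTensor C' ∘ₗ
    (TensorProduct.assoc k C' (A' ⊗[k] A') C').symm.toLinearMap ∘ₗ
    ((TensorProduct.assoc k A' A' C').symm.toLinearMap).lTensor C'

lemma micro10 (m : Measuring k A C A' C' E E') (u : C') (w : A' ⊗[k] (A' ⊗[k] C')) :
    m.α.rTensor C' ((TensorProduct.assoc k C' A' C').symm
      (u ⊗ₜ[k] ((mul' k A').rTensor C' ((TensorProduct.assoc k A' A' C').symm w)))) =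
    lhsMapm m (u ⊗ₜ[k] w) := by
  induction w using TensorProduct.induction_on with
  | zero => simp
  | tmul x r =>
      induction r using TensorProduct.induction_on with
      | zero => simp
      | tmul p q => simp [lhsMapm]
      | add p q hp hq => simp only [tmul_add, map_add, hp, hq]
  | add p q hp hq => simp only [tmul_add, map_add, hp, hq]

lemma mm (m : Measuring k A C A' C' E E') :
    lhsMapm m = Midm m ∘ₗ
      (Coalgebra.comul (R := k) (A := C')).rTensor (A' ⊗[k] (A' ⊗[k] C')) := by
  apply TensorProduct.ext'
  intro u w
  induction w using TensorProduct.induction_on with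
  | zero => simp
  | tmul x r =>
      induction r using TensorProduct.induction_on with
      | zero => simp
      | tmul p q =>
          have h : m.α (u ⊗ₜ[k] (x * p)) =
              (mul' k A) (TensorProduct.map m.α m.α
                ((TensorProduct.assoc k C' A' (C' ⊗[k] A')).symm
                  ((((TensorProduct.assoc k A' C' A').toLinearMap ∘ₗ E'.ψ.rTensor A' ∘ₗ
                    (TensorProduct.assoc k C' A' A').symm.toLinearMap).lTensor C')
                    ((TensorProduct.assoc k C' C' (A' ⊗[k] A'))
                      ((Coalgebra.comul (R := k) (A := C')) u ⊗ₜ[k] (x ⊗ₜ[k] p)))))) := by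
            have := LinearMap.congr_fun m.meas_mul (u ⊗ₜ[k] (x ⊗ₜ[k] p))
            simpa using this
          simp only [lhsMapm, Midm, coe_comp, Function.comp_apply, LinearEquiv.coe_coe,
            lTensor_tmul, assoc_symm_tmul, rTensor_tmul, mul'_apply, h]
          generalize (Coalgebra.comul (R := k) (A := C')) u = s
          induction s using TensorProduct.induction_on with
          | zero => simp
          | tmul u₁ u₂ =>
              simp only [assoc_tmul, lTensor_tmul, coe_comp, Function.comp_apply,
                LinearEquiv.coe_coe, assoc_symm_tmul, rTensor_tmul, I1m]
              generalize E'.ψ (u₂ ⊗ₜ[k] x) = t₂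
              induction t₂ using TensorProduct.induction_on with
              | zero => simp
              | tmul e f => simp
              | add p' q' hp hq => simp only [add_tmul, tmul_add, map_add, hp, hq]
          | add p' q' hp hq => simp only [add_tmul, tmul_add, map_add, hp, hq]
      | add p' q' hp hq => simp only [tmul_add, map_add, hp, hq]
  | add p' q' hp hq => simp only [tmul_add, map_add, hp, hq]

lemma micro4b (m : Measuring k A C A' C' E E') (b : A') (s : C' ⊗[k] C')
    (t : A' ⊗[k] C') :
    Midm m (s ⊗ₜ[k] (E'.ψ.lTensor A' ((TensorProduct.assoc k A' C' A') (t ⊗ₜ[k] b)))) =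
    Wbm m b (Ym m (s ⊗ₜ[k] t)) := by
  induction s using TensorProduct.induction_on with
  | zero => simp
  | tmul u₁ u₂ =>
      induction t using TensorProduct.induction_on with
      | zero => simp [Midm, Ym, Wbm]
      | tmul x y =>
          simp only [Midm, Ym, Wbm, I1m, coe_comp, Function.comp_apply,
            LinearEquiv.coe_coe, assoc_tmul, lTensor_tmul, assoc_symm_tmul, rTensor_tmul,
            mk_apply, flip_apply]
          generalize E'.ψ (u₂ ⊗ₜ[k] x) = t₂
          induction t₂ using TensorProduct.induction_on with
          | zero => simp
          | tmul e f =>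
              simp only [assoc_tmul, lTensor_tmul, assoc_symm_tmul, rTensor_tmul,
                coe_comp, Function.comp_apply, LinearEquiv.coe_coe, mk_apply, flip_apply]
          | add p q hp hq => simp only [add_tmul, tmul_add, map_add, hp, hq]
      | add p q hp hq => simp only [add_tmul, tmul_add, map_add, hp, hq]
  | add p q hp hq => simp only [add_tmul, tmul_add, map_add, hp, hq]

/-- (Id): `Φ_{ab} = Wb_b ∘ Va_a ∘ (Δ ⊗ 1)`. -/
lemma identId (m : Measuring k A C A' C' E E') (a b : A') :
    Phi m (a * b) =
    Wbm m b ∘ₗ Va m a ∘ₗ (Coalgebra.comul (R := k) (A := C')).rTensor C' := by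
  apply TensorProduct.ext'
  intro u v
  simp only [Phi, coe_comp, Function.comp_apply, LinearEquiv.coe_coe, mk_apply,
    flip_apply, assoc_tmul, lTensor_tmul, rTensor_tmul, Va_apply]
  rw [emul, micro10]
  have := LinearMap.congr_fun (mm m)
    (u ⊗ₜ[k] (E'.ψ.lTensor A' ((TensorProduct.assoc k A' C' A') (E'.ψ (v ⊗ₜ[k] a) ⊗ₜ[k] b))))
  simp only [coe_comp, Function.comp_apply, rTensor_tmul] at this
  rw [this, micro4b]

lemma Gmul (m : Measuring k A C A' C' E E') (c : C') (a b : A') :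
    Wm m b (Gm m (c ⊗ₜ[k] a)) = Gm m (c ⊗ₜ[k] (a * b)) := by
  rw [Gm_apply, Gm_apply]
  have h1 := LinearMap.congr_fun (identIc m a b) ((Coalgebra.comul (R := k) (A := C')) c)
  simp only [coe_comp, Function.comp_apply, LinearEquiv.coe_coe] at h1
  rw [h1, Coalgebra.coassoc_symm_apply]
  have h2 := LinearMap.congr_fun (identId m a b) ((Coalgebra.comul (R := k) (A := C')) c)
  simp only [coe_comp, Function.comp_apply, LinearEquiv.coe_coe] at h2
  rw [h2]


lemma measAct_apply (m : Measuring k A C A' C' E E') (nu : M ⊗[k] A →ₗ[k] M)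
    (x : M) (c : C') (a : A') :
    measAct m nu ((x ⊗ₜ[k] c) ⊗ₜ[k] a) =
    nu.rTensor C' ((TensorProduct.assoc k M A C').symm (x ⊗ₜ[k] Gm m (c ⊗ₜ[k] a))) := by
  simp [measAct, Gm]

lemma act_one_lemma (m : Measuring k A C A' C' E E') (ν : RAct k A M) (x : M ⊗[k] C') :
    measAct m ν.act (x ⊗ₜ[k] (1 : A')) = x := by
  induction x using TensorProduct.induction_on with
  | zero => simp [zero_tmul]
  | tmul x c => rw [measAct_apply, key_unit]; simp [ν.act_one]
  | add p q hp hq => rw [add_tmul, map_add, hp, hq]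

lemma lift1 (m : Measuring k A C A' C' E E') (ν : RAct k A M) (x : M)
    (g : A ⊗[k] C') (b : A') :
    measAct m ν.act ((ν.act.rTensor C' ((TensorProduct.assoc k M A C').symm
      (x ⊗ₜ[k] g))) ⊗ₜ[k] b) =
    ν.act.rTensor C' ((TensorProduct.assoc k M A C').symm (x ⊗ₜ[k] Wm m b g)) := by
  induction g using TensorProduct.induction_on with
  | zero => simp [Wm]
  | tmul a' c' =>
      simp only [assoc_symm_tmul, rTensor_tmul, measAct_apply, Wm, coe_comp,
        Function.comp_apply, LinearEquiv.coe_coe, lTensor_tmul, mk_apply, flip_apply]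
      generalize Gm m (c' ⊗ₜ[k] b) = h
      induction h using TensorProduct.induction_on with
      | zero => simp
      | tmul a'' c'' => simp [ν.act_mul]
      | add p q hp hq => simp only [tmul_add, add_tmul, map_add, hp, hq]
  | add p q hp hq => simp only [tmul_add, add_tmul, map_add, hp, hq]

lemma act_mul_lemma (m : Measuring k A C A' C' E E') (ν : RAct k A M)
    (x : M ⊗[k] C') (a b : A') :
    measAct m ν.act ((measAct m ν.act (x ⊗ₜ[k] a)) ⊗ₜ[k] b) =
    measAct m ν.act (x ⊗ₜ[k] (a * b)) := by
  induction x using TensorProduct.induction_on with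
  | zero => simp [zero_tmul]
  | tmul x c => rw [measAct_apply, lift1, Gmul, ← measAct_apply]
  | add p q hp hq => simp only [add_tmul, map_add, hp, hq]

noncomputable def Jm (x : M) : C' ⊗[k] (C' ⊗[k] C') →ₗ[k] (M ⊗[k] C') ⊗[k] (C' ⊗[k] C') :=
  (TensorProduct.assoc k M C' (C' ⊗[k] C')).symm.toLinearMap ∘ₗ
    TensorProduct.mk k M (C' ⊗[k] (C' ⊗[k] C')) x

lemma cA1 (x : M) (s : C' ⊗[k] C') :
    (Coalgebra.comul (R := k) (A := C')).lTensor (M ⊗[k] C')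
      ((TensorProduct.assoc k M C' C').symm (x ⊗ₜ[k] s)) =
    Jm x ((Coalgebra.comul (R := k) (A := C')).lTensor C' s) := by
  induction s using TensorProduct.induction_on with
  | zero => simp
  | tmul c₁ c₂ => simp [Jm]
  | add p q hp hq => simp only [tmul_add, map_add, hp, hq]

lemma cA2 (x : M) (s : C' ⊗[k] C') :
    (TensorProduct.assoc k (M ⊗[k] C') C' C')
      ((coactMC k C' M).rTensor C' ((TensorProduct.assoc k M C' C').symm (x ⊗ₜ[k] s))) =
    Jm x ((TensorProduct.assoc k C' C' C')
      ((Coalgebra.comul (R := k) (A := C')).rTensor C' s)) := by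
  induction s using TensorProduct.induction_on with
  | zero => simp
  | tmul c₁ c₂ =>
      simp only [assoc_symm_tmul, rTensor_tmul, coactMC, coe_comp, Function.comp_apply,
        LinearEquiv.coe_coe, lTensor_tmul, assoc_tmul, Jm, mk_apply]
      generalize (Coalgebra.comul (R := k) (A := C')) c₁ = s₂
      induction s₂ using TensorProduct.induction_on with
      | zero => simp
      | tmul d₁ d₂ => simp
      | add p q hp hq => simp only [add_tmul, tmul_add, map_add, hp, hq]
  | add p q hp hq => simp only [tmul_add, map_add, hp, hq]

lemma coassocMC :
    (Coalgebra.comul (R := k) (A := C')).lTensor (M ⊗[k] C') ∘ₗ coactMC k C' M =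
    (TensorProduct.assoc k (M ⊗[k] C') C' C').toLinearMap ∘ₗ
      (coactMC k C' M).rTensor C' ∘ₗ coactMC k C' M := by
  apply TensorProduct.ext'
  intro x c
  simp only [coe_comp, Function.comp_apply, LinearEquiv.coe_coe]
  have hc : coactMC k C' M (x ⊗ₜ[k] c) =
      (TensorProduct.assoc k M C' C').symm
        (x ⊗ₜ[k] (Coalgebra.comul (R := k) (A := C')) c) := by simp [coactMC]
  rw [hc, cA1, ← Coalgebra.coassoc_apply, ← cA2, ← hc]

lemma counitMC :
    (TensorProduct.rid k (M ⊗[k] C')).toLinearMap ∘ₗ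
      (Coalgebra.counit (R := k) (A := C')).lTensor (M ⊗[k] C') ∘ₗ coactMC k C' M =
    LinearMap.id := by
  apply TensorProduct.ext'
  intro x c
  simp only [coe_comp, Function.comp_apply, LinearEquiv.coe_coe, coactMC, lTensor_tmul,
    id_coe, id_eq]
  have h : ∀ s : C' ⊗[k] C',
      (TensorProduct.rid k (M ⊗[k] C'))
        ((Coalgebra.counit (R := k) (A := C')).lTensor (M ⊗[k] C')
          ((TensorProduct.assoc k M C' C').symm (x ⊗ₜ[k] s))) =
      x ⊗ₜ[k] (TensorProduct.rid k C')
        ((Coalgebra.counit (R := k) (A := C')).lTensor C' s) := by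
    intro s
    induction s using TensorProduct.induction_on with
    | zero => simp
    | tmul c₁ c₂ => simp [TensorProduct.smul_tmul]
    | add p q hp hq => simp only [tmul_add, map_add, hp, hq]
  rw [h, Coalgebra.lTensor_counit_comul]
  simp

lemma Gcomul (m : Measuring k A C A' C' E E') (c : C') (a : A') :
    (Coalgebra.comul (R := k) (A := C')).lTensor A (Gm m (c ⊗ₜ[k] a)) =
    Theta m a ((Coalgebra.comul (R := k) (A := C')) c) := by
  rw [Gm_apply]
  have h := LinearMap.congr_fun (identIb m a) ((Coalgebra.comul (R := k) (A := C')) c)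
  simp only [coe_comp, Function.comp_apply, LinearEquiv.coe_coe] at h
  rw [h, Coalgebra.coassoc_symm_apply]
  have h2 := LinearMap.congr_fun (identIa m a) ((Coalgebra.comul (R := k) (A := C')) c)
  simp only [coe_comp, Function.comp_apply, LinearEquiv.coe_coe] at h2
  rw [h2]

noncomputable def emap (nu : M ⊗[k] A →ₗ[k] M) :
    M ⊗[k] (A ⊗[k] (C' ⊗[k] C')) →ₗ[k] (M ⊗[k] C') ⊗[k] C' :=
  (nu.rTensor C' ∘ₗ (TensorProduct.assoc k M A C').symm.toLinearMap).rTensor C' ∘ₗ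
    (TensorProduct.assoc k M (A ⊗[k] C') C').symm.toLinearMap ∘ₗ
    ((TensorProduct.assoc k A C' C').symm.toLinearMap).lTensor M

lemma ec1 (nu : M ⊗[k] A →ₗ[k] M) (x : M) (g : A ⊗[k] C') :
    coactMC k C' M (nu.rTensor C' ((TensorProduct.assoc k M A C').symm (x ⊗ₜ[k] g))) =
    emap nu (x ⊗ₜ[k] ((Coalgebra.comul (R := k) (A := C')).lTensor A g)) := by
  induction g using TensorProduct.induction_on with
  | zero => simp
  | tmul a' c' =>
      simp only [assoc_symm_tmul, rTensor_tmul, coactMC, coe_comp, Function.comp_apply,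
        LinearEquiv.coe_coe, lTensor_tmul, emap]
      generalize (Coalgebra.comul (R := k) (A := C')) c' = s
      induction s using TensorProduct.induction_on with
      | zero => simp
      | tmul d₁ d₂ => simp
      | add p q hp hq => simp only [tmul_add, map_add, hp, hq]
  | add p q hp hq => simp only [tmul_add, map_add, hp, hq]

lemma ec2 (m : Measuring k A C A' C' E E') (nu : M ⊗[k] A →ₗ[k] M) (x : M)
    (s : C' ⊗[k] C') (a : A') :
    (measAct m nu).rTensor C' ((TensorProduct.assoc k (M ⊗[k] C') A' C').symm
      (E'.ψ.lTensor (M ⊗[k] C') ((TensorProduct.assoc k (M ⊗[k] C') C' A')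
        (((TensorProduct.assoc k M C' C').symm (x ⊗ₜ[k] s)) ⊗ₜ[k] a)))) =
    emap nu (x ⊗ₜ[k] Theta m a s) := by
  induction s using TensorProduct.induction_on with
  | zero => simp [Theta]
  | tmul c₁ c₂ =>
      simp only [assoc_symm_tmul, assoc_tmul, lTensor_tmul, Theta, coe_comp,
        Function.comp_apply, LinearEquiv.coe_coe, mk_apply, flip_apply]
      generalize E'.ψ (c₂ ⊗ₜ[k] a) = t
      induction t using TensorProduct.induction_on with
      | zero => simp [emap]
      | tmul x' y =>
          simp only [assoc_symm_tmul, rTensor_tmul, measAct_apply]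
          generalize Gm m (c₁ ⊗ₜ[k] x') = h
          induction h using TensorProduct.induction_on with
          | zero => simp [emap]
          | tmul p q => simp [emap]
          | add p q hp hq => simp only [add_tmul, tmul_add, map_add, hp, hq]
      | add p q hp hq => simp only [add_tmul, tmul_add, map_add, hp, hq]
  | add p q hp hq => simp only [add_tmul, tmul_add, map_add, hp, hq]

end Aux

/-- if `(α,γ)` measures `(Ã,C̃)_ψ̃` to `(A,C)_ψ`, then for every right
`A`-module `M`, the space `M ⊗ C̃` is a right `(Ã,C̃)_ψ̃`-module with coaction
`M ⊗ Δ̃` and action `(m ⊗ c̃)·ã = m·α(c̃₍₁₎ ⊗ ã_β) ⊗ c̃₍₂₎^β`. -/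
theorem statement9 {k A C A' C' M : Type} [Field k] [Ring A] [Algebra k A]
    [AddCommGroup C] [Module k C] [Coalgebra k C]
    [Ring A'] [Algebra k A'] [AddCommGroup C'] [Module k C'] [Coalgebra k C']
    [AddCommGroup M] [Module k M]
    {E : Entwining k A C} {E' : Entwining k A' C'}
    (m : Measuring k A C A' C' E E') (ν : RAct k A M) :
    ∃ (β : RAct k A' (M ⊗[k] C')) (ρ : RComod k C' (M ⊗[k] C')),
      β.act = measAct m ν.act ∧ ρ.ρ = coactMC k C' M ∧ EntwCompat E' β ρ := by
  classical
  refine ⟨⟨measAct m ν.act, fun x => act_one_lemma m ν x,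
      fun x a b => act_mul_lemma m ν x a b⟩,
    ⟨coactMC k C' M, coassocMC, counitMC⟩, rfl, rfl, ?_⟩
  unfold EntwCompat
  apply TensorProduct.ext'
  intro z a
  induction z using TensorProduct.induction_on with
  | zero => simp [zero_tmul]
  | tmul x c =>
      simp only [coe_comp, Function.comp_apply, LinearEquiv.coe_coe, rTensor_tmul]
      rw [measAct_apply, ec1, Gcomul]
      have h : coactMC k C' M (x ⊗ₜ[k] c) =
          (TensorProduct.assoc k M C' C').symm
            (x ⊗ₜ[k] (Coalgebra.comul (R := k) (A := C')) c) := by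
        simp [coactMC]
      rw [h, ec2]
  | add p q hp hq => simp only [add_tmul, map_add, hp, hq]
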